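/- arXiv:2312.09852 — 4 statements merged into one kernel-verified Lean document; each statement's English description precedes it below -/
import Mathlib

section
/- Let F : ℝ → ℝ^{m×m} and R : ℝ → ℝ^{m×n} be differentiable matrix-valued functions, let B : ℝ → ℝ^{m×m} be any matrix-valued function, and let Q be a fixed real m×n matrix. Assume that for every t: (i) R(t)ᵀR(t) = Iₙ, (ii) QᵀQ = Iₙ, (iii) QQᵀB(t) = B(t), (iv) F(t)B(t) = Iₘ, and (v) (QᵀB(t)R(t))(R(t)ᵀF(t)Q) = Iₙ. Then for every t the n×n matrix R(t)ᵀF(t)Q is invertible, and the function t ↦ log|det(R(t)ᵀF(t)Q)| is differentiable with derivative tr(R(t)ᵀ F′(t) B(t) R(t)), where F′(t) is the entrywise derivative of F. -/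
open Matrix

open Finset in
lemma hasDerivAt_det_aux {k : Type*} [Fintype k] [DecidableEq k]
    (M : ℝ → Matrix k k ℝ) (M' : Matrix k k ℝ) (t : ℝ)
    (h : ∀ i j, HasDerivAt (fun s => M s i j) (M' i j) t) :
    HasDerivAt (fun s => (M s).det) (((M t).adjugate * M').trace) t := by
  have key : HasDerivAt (fun s => (M s).det)
      (∑ σ : Equiv.Perm k, (Equiv.Perm.sign σ : ℝ) *
        (∑ i, (∏ j ∈ univ.erase i, M t (σ j) j) • M' (σ i) i)) t := by
    simp only [det_apply']
    exact HasDerivAt.fun_sum fun σ _ =>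
      ((HasDerivAt.fun_finsetProd (fun i _ => h (σ i) i)).const_mul _)
  convert key using 1
  have swap : (∑ σ : Equiv.Perm k, (Equiv.Perm.sign σ : ℝ) *
        ∑ i : k, (∏ j ∈ univ.erase i, M t (σ j) j) • M' (σ i) i)
      = ∑ i : k, ∑ σ : Equiv.Perm k, (Equiv.Perm.sign σ : ℝ) *
        ((∏ j ∈ univ.erase i, M t (σ j) j) * M' (σ i) i) := by
    simp_rw [Finset.mul_sum, smul_eq_mul]
    exact Finset.sum_comm
  rw [swap]
  have hdet : ∀ i : k, ((M t).updateCol i (fun r => M' r i)).det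
      = ∑ σ : Equiv.Perm k, (Equiv.Perm.sign σ : ℝ) *
        ((∏ j ∈ univ.erase i, M t (σ j) j) * M' (σ i) i) := by
    intro i
    rw [det_apply']
    refine Finset.sum_congr rfl fun σ _ => ?_
    congr 1
    rw [← Finset.mul_prod_erase univ _ (mem_univ i), mul_comm]
    congr 1
    · exact Finset.prod_congr rfl fun j hj => by
        simp [updateCol_apply, (Finset.mem_erase.mp hj).1]
    · simp [updateCol_apply]
  simp_rw [← hdet]
  have : ∀ i : k, ((M t).updateCol i (fun r => M' r i)).det
      = cramer (M t) (fun r => M' r i) i := fun i => (cramer_apply _ _ _).symm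
  simp_rw [this, cramer_eq_adjugate_mulVec]
  simp [Matrix.trace, Matrix.mul_apply, Matrix.diag, mulVec, dotProduct]

/-- Deterministic matrix form of the manifold volume-change gradient:
under the stated tangent-space conditions, `t ↦ log |det (R(t)ᵀ F(t) Q)|` is
differentiable with derivative `tr(R(t)ᵀ F′(t) B(t) R(t))`. -/
theorem manifold_logdet_deriv
    {m n : ℕ}
    (F F' : ℝ → Matrix (Fin m) (Fin m) ℝ)
    (B : ℝ → Matrix (Fin m) (Fin m) ℝ)
    (R R' : ℝ → Matrix (Fin m) (Fin n) ℝ)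
    (Q : Matrix (Fin m) (Fin n) ℝ)
    (hF : ∀ (i j : Fin m) (t : ℝ), HasDerivAt (fun s => F s i j) (F' t i j) t)
    (hR : ∀ (i : Fin m) (j : Fin n) (t : ℝ),
      HasDerivAt (fun s => R s i j) (R' t i j) t)
    (hRortho : ∀ t, (R t).transpose * R t = 1)
    (hQortho : Q.transpose * Q = 1)
    (hQB : ∀ t, Q * Q.transpose * B t = B t)
    (hFB : ∀ t, F t * B t = 1)
    (hInv : ∀ t, (Q.transpose * B t * R t) * ((R t).transpose * F t * Q) = 1) :
    ∀ t : ℝ,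
      IsUnit ((R t).transpose * F t * Q) ∧
      HasDerivAt (fun s => Real.log |((R s).transpose * F s * Q).det|)
        ((R t).transpose * F' t * B t * R t).trace t := by
  intro t
  set Mt := (R t).transpose * F t * Q with hMtdef
  set A := Q.transpose * B t * R t with hAdef
  have hAM : A * Mt = 1 := hInv t
  have hMA : Mt * A = 1 := mul_eq_one_comm.mp hAM
  have hdetu : IsUnit Mt.det := by
    have h1 : Mt.det * A.det = 1 := by
      rw [← Matrix.det_mul, hMA, Matrix.det_one]
    exact IsUnit.of_mul_eq_one _ h1
  have hUnit : IsUnit Mt := (Matrix.isUnit_iff_isUnit_det Mt).mpr hdetu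
  refine ⟨hUnit, ?_⟩
  -- det is nonzero
  have hdet0 : Mt.det ≠ 0 := by
    exact hdetu.ne_zero
  -- adjugate
  have hadj : Mt.adjugate = Mt.det • A := by
    calc Mt.adjugate = Mt.adjugate * (Mt * A) := by rw [hMA, mul_one]
      _ = (Mt.adjugate * Mt) * A := (Matrix.mul_assoc _ _ _).symm
      _ = Mt.det • A := by rw [Matrix.adjugate_mul, Matrix.smul_mul, Matrix.one_mul]
  -- entrywise derivative of s ↦ R(s)ᵀ F(s) Q
  set M't : Matrix (Fin n) (Fin n) ℝ :=
    (R' t).transpose * F t * Q + (R t).transpose * F' t * Q with hM'def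
  have hentry : ∀ i j, HasDerivAt (fun s => ((R s).transpose * F s * Q) i j)
      (M't i j) t := by
    intro i j
    have heq : ∀ s, ((R s).transpose * F s * Q) i j
        = ∑ b, ∑ a, R s a i * F s a b * Q b j := by
      intro s
      simp [Matrix.mul_apply, transpose_apply, Finset.sum_mul]
    have hd : HasDerivAt (fun s => ∑ b, ∑ a, R s a i * F s a b * Q b j)
        (∑ b, ∑ a, (R' t a i * F t a b + R t a i * F' t a b) * Q b j) t :=
      HasDerivAt.fun_sum fun b _ => HasDerivAt.fun_sum fun a _ =>
        ((hR a i t).mul (hF a b t)).mul_const (Q b j)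
    have hval : M't i j
        = ∑ b, ∑ a, (R' t a i * F t a b + R t a i * F' t a b) * Q b j := by
      simp [hM'def, Matrix.add_apply, Matrix.mul_apply, transpose_apply,
        Finset.sum_mul, ← Finset.sum_add_distrib, add_mul]
    rw [hval]
    exact hd.congr_of_eventuallyEq (Filter.Eventually.of_forall heq)
  -- derivative of the determinant
  have hddet : HasDerivAt (fun s => ((R s).transpose * F s * Q).det)
      ((Mt.adjugate * M't).trace) t := hasDerivAt_det_aux _ _ t hentry
  -- derivative of log |det|
  have hlog : HasDerivAt (fun s => Real.log |((R s).transpose * F s * Q).det|)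
      ((Mt.adjugate * M't).trace / Mt.det) t := by
    have := hddet.log hdet0
    refine this.congr_of_eventuallyEq ?_
    filter_upwards with s
    rw [Real.log_abs]
  -- simplify the derivative value
  have hval : (Mt.adjugate * M't).trace / Mt.det = (A * M't).trace := by
    rw [hadj, Matrix.smul_mul, trace_smul, smul_eq_mul]
    field_simp
  -- trace of R'ᵀ R vanishes
  have hRR' : ((R' t).transpose * R t).trace = 0 := by
    have h2 : ∀ i : Fin n, ∑ a, (R' t a i * R t a i + R t a i * R' t a i) = 0 := by
      intro i
      have hd : HasDerivAt (fun s => ∑ a, R s a i * R s a i)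
          (∑ a, (R' t a i * R t a i + R t a i * R' t a i)) t :=
        HasDerivAt.fun_sum fun a _ => (hR a i t).mul (hR a i t)
      have hconst : (fun s => ∑ a, R s a i * R s a i) = fun _ => (1 : ℝ) := by
        funext s
        have := congrFun (congrFun (hRortho s) i) i
        simpa [Matrix.mul_apply, transpose_apply, Matrix.one_apply] using this
      rw [hconst] at hd
      exact hd.unique (hasDerivAt_const t 1)
    have : ∑ i : Fin n, ∑ a, R' t a i * R t a i = 0 := by
      have := Finset.sum_congr rfl (fun i (_ : i ∈ Finset.univ) => h2 i)
      simp only [Finset.sum_const_zero] at this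
      have h2x : ∑ i : Fin n, (2 : ℝ) * ∑ a, R' t a i * R t a i = 0 := by
        rw [← this]
        congr 1; funext i
        rw [Finset.mul_sum]
        congr 1; funext a
        ring
      simpa [← Finset.mul_sum] using h2x
    simpa [Matrix.trace, Matrix.diag, Matrix.mul_apply, transpose_apply] using this
  -- B is a two-sided inverse of F
  have hBF : B t * F t = 1 := mul_eq_one_comm.mp (hFB t)
  -- trace algebra
  have hterm1 : (A * ((R' t).transpose * F t * Q)).trace = 0 := by
    rw [hAdef]
    calc ((Q.transpose * B t * R t) * ((R' t).transpose * F t * Q)).trace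
        = (Q.transpose * (B t * R t * ((R' t).transpose * F t * Q))).trace := by
          simp only [Matrix.mul_assoc]
      _ = ((B t * R t * ((R' t).transpose * F t * Q)) * Q.transpose).trace :=
          trace_mul_comm _ _
      _ = ((B t * (R t * ((R' t).transpose * F t))) * (Q * Q.transpose)).trace := by
          simp only [Matrix.mul_assoc]
      _ = ((Q * Q.transpose) * (B t * (R t * ((R' t).transpose * F t)))).trace :=
          trace_mul_comm _ _
      _ = (B t * (R t * ((R' t).transpose * F t))).trace := by
          rw [← Matrix.mul_assoc, hQB t]
      _ = (R t * ((R' t).transpose * (F t * B t))).trace := by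
          rw [trace_mul_comm]; simp only [Matrix.mul_assoc]
      _ = (R t * (R' t).transpose).trace := by rw [hFB t, Matrix.mul_one]
      _ = ((R' t).transpose * R t).trace := trace_mul_comm _ _
      _ = 0 := hRR'
  have hterm2 : (A * ((R t).transpose * F' t * Q)).trace
      = ((R t).transpose * F' t * B t * R t).trace := by
    rw [hAdef]
    calc ((Q.transpose * B t * R t) * ((R t).transpose * F' t * Q)).trace
        = (Q.transpose * (B t * R t * ((R t).transpose * F' t * Q))).trace := by
          simp only [Matrix.mul_assoc]
      _ = ((B t * R t * ((R t).transpose * F' t * Q)) * Q.transpose).trace :=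
          trace_mul_comm _ _
      _ = ((B t * (R t * ((R t).transpose * F' t))) * (Q * Q.transpose)).trace := by
          simp only [Matrix.mul_assoc]
      _ = ((Q * Q.transpose) * (B t * (R t * ((R t).transpose * F' t)))).trace :=
          trace_mul_comm _ _
      _ = (B t * (R t * ((R t).transpose * F' t))).trace := by
          rw [← Matrix.mul_assoc, hQB t]
      _ = (R t * ((R t).transpose * (F' t * B t))).trace := by
          rw [trace_mul_comm]; simp only [Matrix.mul_assoc]
      _ = (((R t).transpose * (F' t * B t)) * R t).trace := trace_mul_comm _ _
      _ = ((R t).transpose * F' t * B t * R t).trace := by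
          simp only [Matrix.mul_assoc]
  have hfinal : (Mt.adjugate * M't).trace / Mt.det
      = ((R t).transpose * F' t * B t * R t).trace := by
    rw [hval, hM'def, Matrix.mul_add, trace_add, hterm1, hterm2, zero_add]
  rw [← hfinal]
  exact hlog
end

section
/- Let D, F, Fᵢ, G be real m×m matrices and Q, R real m×n matrices satisfying: QᵀQ = Iₙ, RᵀR = Iₙ, QQᵀG = G, QQᵀFᵢ = Fᵢ, and QᵀFᵢRRᵀFQ = Iₙ. Then |tr(Rᵀ D G R) − tr(Rᵀ D Fᵢ R)| ≤ ‖Rᵀ D Fᵢ R‖_F · ‖Rᵀ F G R − Iₙ‖_F. -/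
open Matrix

/-- The Frobenius norm of a matrix: the square root of the sum of the
squares of its entries. -/
noncomputable def frobNorm {k l : ℕ} (A : Matrix (Fin k) (Fin l) ℝ) : ℝ :=
  Real.sqrt (∑ i, ∑ j, (A i j) ^ 2)

/-- Error bound (Theorem B.1): the difference between the trace with the
decoder Jacobian `G` and with the exact inverse Jacobian `Fᵢ` is bounded by
the Frobenius-norm mismatch between encoder and decoder Jacobians. -/
theorem gradient_estimator_error_bound
    {m n : ℕ}
    (D F Fi G : Matrix (Fin m) (Fin m) ℝ)
    (Q R : Matrix (Fin m) (Fin n) ℝ)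
    (hQ : Q.transpose * Q = 1)
    (hR : R.transpose * R = 1)
    (hG : Q * Q.transpose * G = G)
    (hFi : Q * Q.transpose * Fi = Fi)
    (hInv : Q.transpose * Fi * R * R.transpose * F * Q = 1) :
    |(R.transpose * D * G * R).trace - (R.transpose * D * Fi * R).trace| ≤
      frobNorm (R.transpose * D * Fi * R) *
        frobNorm (R.transpose * F * G * R - 1) := by
  set A := R.transpose * D * Fi * R with hA
  set B := R.transpose * F * G * R with hB
  -- key matrix identity: Fi * R * Rᵀ * F * G = G
  have key : Fi * R * R.transpose * F * G = G := by
    have h1 : Fi * R * R.transpose * F * G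
        = Q * (Q.transpose * Fi * R * R.transpose * F * Q) * (Q.transpose * G) := by
      conv_lhs => rw [← hFi]
      conv_lhs => rw [← hG]
      simp only [Matrix.mul_assoc]
    rw [h1, hInv, Matrix.mul_one, ← Matrix.mul_assoc, hG]
  have hprod : A * B = R.transpose * D * G * R := by
    have : A * B = R.transpose * D * (Fi * R * R.transpose * F * G) * R := by
      rw [hA, hB]; simp only [Matrix.mul_assoc]
    rw [this, key]
  -- trace difference equals trace (A * (B - 1))
  have htr : (R.transpose * D * G * R).trace - A.trace = (A * (B - 1)).trace := by
    rw [Matrix.mul_sub, Matrix.mul_one, Matrix.trace_sub, hprod]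
  rw [htr]
  -- Cauchy-Schwarz
  have htrace : (A * (B - 1)).trace = ∑ p : Fin n × Fin n, A p.1 p.2 * (B - 1) p.2 p.1 := by
    simp only [Matrix.trace, Matrix.diag, Matrix.mul_apply]
    rw [← Finset.univ_product_univ, Finset.sum_product]
  rw [htrace]
  have hcs := Finset.sum_mul_sq_le_sq_mul_sq Finset.univ
    (fun p : Fin n × Fin n => A p.1 p.2) (fun p => (B - 1) p.2 p.1)
  have h1 : (∑ p : Fin n × Fin n, A p.1 p.2 ^ 2) = ∑ i, ∑ j, (A i j) ^ 2 := by
    rw [← Finset.sum_product']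
    rfl
  have h2 : (∑ p : Fin n × Fin n, ((B - 1) p.2 p.1) ^ 2) = ∑ i, ∑ j, ((B - 1) i j) ^ 2 := by
    rw [← Finset.univ_product_univ, Finset.sum_product]
    exact Finset.sum_comm
  rw [h1, h2] at hcs
  have habs : |∑ p : Fin n × Fin n, A p.1 p.2 * (B - 1) p.2 p.1|
      ≤ Real.sqrt ((∑ i, ∑ j, (A i j) ^ 2) * (∑ i, ∑ j, ((B - 1) i j) ^ 2)) := by
    rw [← Real.sqrt_sq_eq_abs]
    exact Real.sqrt_le_sqrt hcs
  refine habs.trans_eq ?_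
  rw [frobNorm, frobNorm, Real.sqrt_mul (by positivity)]
end

section
/- Let J and G be real m×m matrices and Q, R real m×n matrices such that RᵀR = Iₙ and R·Rᵀ·J·Q = J·Q. Then det(Qᵀ Jᵀ G J Q) = det(Rᵀ J Q)² · det(Rᵀ G R). -/
open Matrix

/-- Linear-algebraic core of the manifold change of variables (Theorem 4.1):
the pullback-metric determinant factors as
`det(Qᵀ Jᵀ G J Q) = det(Rᵀ J Q)² det(Rᵀ G R)`. -/
theorem pullback_metric_det_factorization
    {m n : ℕ}
    (J G : Matrix (Fin m) (Fin m) ℝ)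
    (Q R : Matrix (Fin m) (Fin n) ℝ)
    (hR : R.transpose * R = 1)
    (hJQ : R * R.transpose * J * Q = J * Q) :
    (Q.transpose * J.transpose * G * J * Q).det =
      (R.transpose * J * Q).det ^ 2 * (R.transpose * G * R).det := by
  set A := R.transpose * J * Q with hA
  have hRA : J * Q = R * A := by
    rw [hA, ← hJQ]; simp only [Matrix.mul_assoc]
  have key : Q.transpose * J.transpose * G * J * Q =
      A.transpose * (R.transpose * G * R) * A := by
    have ht : Q.transpose * J.transpose = A.transpose * R.transpose := by
      rw [← transpose_mul, hRA, transpose_mul]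
    calc Q.transpose * J.transpose * G * J * Q
        = Q.transpose * J.transpose * G * (J * Q) := by rw [Matrix.mul_assoc]
      _ = A.transpose * R.transpose * G * (R * A) := by rw [ht, hRA]
      _ = A.transpose * (R.transpose * G * R) * A := by simp only [Matrix.mul_assoc]
  rw [key, det_mul, det_mul, det_transpose, sq]
  ring
end

section
/- Let n ≥ 1, let μ be the n-fold product of the standard Gaussian measure on ℝ, and define w : ℝⁿ → ℝⁿ by w(v) = √n · v/‖v‖ for v ≠ 0 and w(0) = 0. Then for all i, j: ∫ wᵢ dμ = 0 and ∫ wᵢ wⱼ dμ equals 1 if i = j and 0 otherwise. -/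
open MeasureTheory ProbabilityTheory

lemma gauss_neg_preserving :
    MeasurePreserving (fun x : ℝ => -x) (gaussianReal 0 1) (gaussianReal 0 1) := by
  constructor
  · exact measurable_neg
  · have h := gaussianReal_map_const_mul (μ := 0) (v := 1) (-1)
    simp only [neg_one_mul, mul_zero] at h
    convert h using 2
    ext; norm_num

lemma integral_comp_mp {α : Type*} [MeasurableSpace α] {μ : Measure α} {T : α → α}
    (hT : MeasurePreserving T μ μ) {f : α → ℝ} (hf : Measurable f) :
    (∫ v, f v ∂μ) = ∫ v, f (T v) ∂μ := by
  calc (∫ v, f v ∂μ) = ∫ v, f v ∂(Measure.map T μ) := by rw [hT.map_eq]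
    _ = ∫ v, f (T v) ∂μ := integral_map hT.measurable.aemeasurable
          (by rw [hT.map_eq]; exact hf.aestronglyMeasurable)

lemma integral_eq_zero_of_comp_neg {α : Type*} [MeasurableSpace α] {μ : Measure α}
    {T : α → α} (hT : MeasurePreserving T μ μ) {f : α → ℝ} (hf : Measurable f)
    (h : ∀ v, f (T v) = - f v) : (∫ v, f v ∂μ) = 0 := by
  have h1 : (∫ v, f v ∂μ) = - ∫ v, f v ∂μ := by
    calc (∫ v, f v ∂μ) = ∫ v, f (T v) ∂μ := integral_comp_mp hT hf
      _ = ∫ v, - f v ∂μ := by simp only [h]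
      _ = - ∫ v, f v ∂μ := integral_neg f
  linarith

/-- Rescaling standard Gaussian noise to Euclidean length `√n` preserves
zero mean and unit second moment (Appendix A.4). -/
theorem rescaled_gaussian_moments
    {n : ℕ} (hn : 1 ≤ n)
    (w : (Fin n → ℝ) → Fin n → ℝ)
    (hw : ∀ v : Fin n → ℝ, w v =
      if v = 0 then 0
      else fun i => Real.sqrt n * v i / Real.sqrt (∑ k, v k ^ 2)) :
    ∀ i j : Fin n,
      (∫ v, w v i ∂(Measure.pi fun _ : Fin n => gaussianReal 0 1)) = 0 ∧
      (∫ v, w v i * w v j ∂(Measure.pi fun _ : Fin n => gaussianReal 0 1)) =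
        if i = j then (1 : ℝ) else 0 := by
  set μn := Measure.pi fun _ : Fin n => gaussianReal 0 1 with hμn
  haveI : IsProbabilityMeasure μn := by
    constructor
    rw [hμn, ← Set.pi_univ Set.univ, Measure.pi_pi]
    simp
  -- positivity of the squared norm off 0
  have hS : ∀ v : Fin n → ℝ, v ≠ 0 → 0 < ∑ k, v k ^ 2 := by
    intro v hv
    obtain ⟨k, hk⟩ := Function.ne_iff.mp hv
    have hk' : v k ≠ 0 := hk
    have h1 : (0:ℝ) < v k ^ 2 :=
      lt_of_le_of_ne (sq_nonneg _) (Ne.symm (pow_ne_zero 2 hk'))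
    exact lt_of_lt_of_le h1
      (Finset.single_le_sum (fun m _ => sq_nonneg (v m)) (Finset.mem_univ k))
  -- measurability
  have hwm : ∀ i, Measurable fun v : Fin n → ℝ => w v i := by
    intro i
    have heq : (fun v : Fin n → ℝ => w v i)
        = fun v => if v = 0 then 0 else Real.sqrt n * v i / Real.sqrt (∑ k, v k ^ 2) := by
      funext v; rw [hw v]; by_cases h : v = 0 <;> simp [h]
    rw [heq]
    have hm : Measurable fun v : Fin n → ℝ => ∑ k, v k ^ 2 :=
      Finset.measurable_sum _ (fun k _ => (measurable_pi_apply k).pow_const 2)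
    exact Measurable.ite measurableSet_eq measurable_const
      ((measurable_const.mul (measurable_pi_apply i)).div hm.sqrt)
  -- uniform bound
  have habs : ∀ (v : Fin n → ℝ) i, |w v i| ≤ Real.sqrt n := by
    intro v i
    rw [hw v]
    by_cases h : v = 0
    · simp [h]
    · rw [if_neg h]
      have hS0 := hS v h
      have h2 : 0 < Real.sqrt (∑ k, v k ^ 2) := Real.sqrt_pos.mpr hS0
      have h1 : |v i| ≤ Real.sqrt (∑ k, v k ^ 2) := by
        rw [← Real.sqrt_sq_eq_abs]
        exact Real.sqrt_le_sqrt
          (Finset.single_le_sum (fun m _ => sq_nonneg (v m)) (Finset.mem_univ i))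
      show |Real.sqrt n * v i / Real.sqrt (∑ k, v k ^ 2)| ≤ Real.sqrt n
      rw [abs_div, abs_mul, abs_of_nonneg (Real.sqrt_nonneg (n:ℝ)),
        abs_of_nonneg h2.le, div_le_iff₀ h2]
      calc Real.sqrt n * |v i| ≤ Real.sqrt n * Real.sqrt (∑ k, v k ^ 2) :=
            mul_le_mul_of_nonneg_left h1 (Real.sqrt_nonneg _)
        _ = Real.sqrt n * Real.sqrt (∑ k, v k ^ 2) := rfl
  -- integrability
  have hint2 : ∀ i j, Integrable (fun v => w v i * w v j) μn := by
    intro i j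
    refine (integrable_const (Real.sqrt n * Real.sqrt n)).mono'
      ((hwm i).mul (hwm j)).aestronglyMeasurable (ae_of_all _ fun v => ?_)
    rw [Real.norm_eq_abs, abs_mul]
    exact mul_le_mul (habs v i) (habs v j) (abs_nonneg _) (Real.sqrt_nonneg _)
  -- pointwise symmetry facts
  have hwneg : ∀ (v : Fin n → ℝ) i, w (-v) i = - w v i := by
    intro v i
    rw [hw, hw]
    by_cases h : v = 0
    · simp [h]
    · have h' : -v ≠ 0 := fun hc => h (by simpa [neg_eq_zero] using hc)
      rw [if_neg h', if_neg h]
      have hsum : ∑ k, (-v) k ^ 2 = ∑ k, v k ^ 2 := by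
        refine Finset.sum_congr rfl fun k _ => ?_
        simp [neg_sq]
      show Real.sqrt n * (-v) i / Real.sqrt (∑ k, (-v) k ^ 2)
          = -(Real.sqrt n * v i / Real.sqrt (∑ k, v k ^ 2))
      rw [hsum]
      simp only [Pi.neg_apply]
      ring
  have hwperm : ∀ (e : Equiv.Perm (Fin n)) (v : Fin n → ℝ) (i), w (v ∘ e) i = w v (e i) := by
    intro e v i
    rw [hw, hw]
    by_cases h : v = 0
    · subst h
      have h0 : ((0 : Fin n → ℝ) ∘ e) = 0 := rfl
      rw [h0]; simp
    · have h' : v ∘ e ≠ 0 := by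
        intro hc
        apply h
        funext k
        have := congrFun hc (e.symm k)
        simpa using this
      rw [if_neg h', if_neg h]
      have hsum : (∑ k, v (e k) ^ 2) = ∑ k, v k ^ 2 := Equiv.sum_comp e (fun k => v k ^ 2)
      show Real.sqrt n * (v ∘ e) i / Real.sqrt (∑ k, (v ∘ e) k ^ 2)
          = Real.sqrt n * v (e i) / Real.sqrt (∑ k, v k ^ 2)
      simp only [Function.comp_apply]
      rw [hsum]
  -- negation is measure preserving on the product
  have hTneg : MeasurePreserving (fun v : Fin n → ℝ => -v) μn μn := by
    have h := measurePreserving_pi (fun _ : Fin n => gaussianReal 0 1)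
      (fun _ : Fin n => gaussianReal 0 1) (fun _ => gauss_neg_preserving)
    exact h
  -- the measure of {0} is zero
  have hzero : μn ({0} : Set (Fin n → ℝ)) = 0 := by
    have hset : ({0} : Set (Fin n → ℝ)) = Set.pi Set.univ (fun _ => ({0} : Set ℝ)) := by
      ext v
      simp [funext_iff, Set.mem_pi]
    rw [hμn, hset, Measure.pi_pi]
    have hg : gaussianReal 0 1 ({0} : Set ℝ) = 0 :=
      gaussianReal_absolutelyContinuous 0 one_ne_zero (by simp)
    simp only [hg, Finset.prod_const, Finset.card_univ, Fintype.card_fin]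
    exact zero_pow (by omega)
  have hne : ∀ᵐ v ∂μn, v ≠ 0 := by
    rw [ae_iff]
    have : {v : Fin n → ℝ | ¬ v ≠ 0} = {0} := by ext v; simp
    rw [this]
    exact hzero
  intro i j
  constructor
  · -- mean zero
    refine integral_eq_zero_of_comp_neg hTneg (hwm i) fun v => ?_
    exact hwneg v i
  · by_cases hij : i = j
    · subst hij
      rw [if_pos rfl]
      -- all diagonal moments are equal
      have hdiageq : ∀ j' : Fin n,
          (∫ v, w v j' * w v j' ∂μn) = ∫ v, w v i * w v i ∂μn := by
        intro j'
        by_cases h' : j' = i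
        · rw [h']
        · set e : Equiv.Perm (Fin n) := Equiv.swap j' i with he
          have hT : MeasurePreserving (fun v : Fin n → ℝ => v ∘ e) μn μn := by
            have h := measurePreserving_piCongrLeft (fun _ : Fin n => gaussianReal 0 1) e
            have hco : ⇑(MeasurableEquiv.piCongrLeft (fun _ : Fin n => ℝ) e)
                = fun v : Fin n → ℝ => v ∘ e := by
              funext v
              funext m
              have h1 := MeasurableEquiv.piCongrLeft_apply_apply
                (β := fun _ : Fin n => ℝ) e v (e m)
              have h2 : e (e m) = m := Equiv.swap_apply_self _ _ _
              rw [h2] at h1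
              simpa using h1
            rw [← hco]
            exact h
          have := integral_comp_mp (μ := μn) hT
            (f := fun v => w v j' * w v j') ((hwm j').mul (hwm j'))
          rw [this]
          have : ∀ v : Fin n → ℝ, w (v ∘ e) j' = w v i := by
            intro v
            rw [hwperm e v j']
            congr 1
            rw [he]
            exact Equiv.swap_apply_left _ _
          simp only [this]
      -- sum of diagonal moments equals n
      have h0 : ∀ v : Fin n → ℝ, v ≠ 0 → (∑ i', w v i' * w v i') = n := by
        intro v hv
        have hSpos := hS v hv
        have hsq : Real.sqrt (∑ k, v k ^ 2) * Real.sqrt (∑ k, v k ^ 2) = ∑ k, v k ^ 2 :=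
          Real.mul_self_sqrt hSpos.le
        have hnn : Real.sqrt n * Real.sqrt n = n := Real.mul_self_sqrt (Nat.cast_nonneg n)
        calc (∑ i', w v i' * w v i')
            = ∑ i', (n * v i' ^ 2) / (∑ k, v k ^ 2) := by
              refine Finset.sum_congr rfl fun i' _ => ?_
              rw [hw, if_neg hv]
              show (Real.sqrt n * v i' / Real.sqrt (∑ k, v k ^ 2))
                  * (Real.sqrt n * v i' / Real.sqrt (∑ k, v k ^ 2))
                  = (n * v i' ^ 2) / (∑ k, v k ^ 2)
              rw [div_mul_div_comm, hsq]
              have hnum : Real.sqrt n * v i' * (Real.sqrt n * v i') = n * v i' ^ 2 := by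
                linear_combination (v i' ^ 2) * hnn
              rw [hnum]
          _ = (n * ∑ i', v i' ^ 2) / (∑ k, v k ^ 2) := by
              rw [← Finset.sum_div, ← Finset.mul_sum]
          _ = n := by field_simp
      have hae : (fun v => ∑ i', w v i' * w v i') =ᵐ[μn] fun _ => (n : ℝ) := by
        filter_upwards [hne] with v hv
        exact h0 v hv
      have hsum : (∑ i', ∫ v, w v i' * w v i' ∂μn) = n := by
        rw [← integral_finset_sum _ (fun i' _ => hint2 i' i')]
        rw [integral_congr_ae hae, integral_const]
        simp
      have hcard : (n : ℝ) * (∫ v, w v i * w v i ∂μn) = n := by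
        conv_rhs => rw [← hsum]
        rw [Finset.sum_congr rfl (fun j' _ => hdiageq j')]
        rw [Finset.sum_const, Finset.card_univ, Fintype.card_fin, nsmul_eq_mul]
      have hn0 : (n : ℝ) ≠ 0 := by positivity
      exact mul_left_cancel₀ hn0 (hcard.trans (mul_one (n:ℝ)).symm)
    · rw [if_neg hij]
      -- flip coordinate i
      set T : (Fin n → ℝ) → (Fin n → ℝ) := fun v k => if k = i then -v k else v k with hT
      have hTmp : MeasurePreserving T μn μn := by
        have h := measurePreserving_pi (fun _ : Fin n => gaussianReal 0 1)
          (fun _ : Fin n => gaussianReal 0 1)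
          (f := fun k (x : ℝ) => if k = i then -x else x)
          (fun k => by
            by_cases hk : k = i
            · simpa [hk] using gauss_neg_preserving
            · simp only [hk, if_false]; exact MeasurePreserving.id (gaussianReal 0 1))
        exact h
      refine integral_eq_zero_of_comp_neg hTmp ((hwm i).mul (hwm j)) fun v => ?_
      by_cases hv : v = 0
      · have hTv : T v = 0 := by
          funext k
          simp [hT, hv]
        rw [hTv, hv, hw 0, if_pos rfl]
        simp
      · have hTv : T v ≠ 0 := by
          intro hc
          apply hv
          funext k
          have := congrFun hc k
          by_cases hk : k = i <;> simpa [hT, hk, neg_eq_zero] using this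
        have hsum : (∑ k, T v k ^ 2) = ∑ k, v k ^ 2 := by
          refine Finset.sum_congr rfl fun k _ => ?_
          by_cases hk : k = i <;> simp [hT, hk, neg_sq]
        have hwi : w (T v) i = - w v i := by
          rw [hw, hw, if_neg hTv, if_neg hv]
          show Real.sqrt n * T v i / Real.sqrt (∑ k, T v k ^ 2)
              = -(Real.sqrt n * v i / Real.sqrt (∑ k, v k ^ 2))
          rw [hsum]
          have : T v i = - v i := by simp [hT]
          rw [this]; ring
        have hwj : w (T v) j = w v j := by
          rw [hw, hw, if_neg hTv, if_neg hv]
          show Real.sqrt n * T v j / Real.sqrt (∑ k, T v k ^ 2)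
              = Real.sqrt n * v j / Real.sqrt (∑ k, v k ^ 2)
          rw [hsum]
          have : T v j = v j := by
            simp only [hT]
            exact if_neg (fun h => hij h.symm)
          rw [this]
        rw [hwi, hwj]; ring
end
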